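/- Let α − β > 1/2 and T > 0. Define χ(t) := ∫₀^{T−t} (∫_r^{t+r} s^{α−β−1} ds)² dr. Then there exists N = N(α,β,T) such that χ(t) ≤ N t² for all t ∈ (0,T). -/

import Mathlib

open MeasureTheory Set

/-- The function `χ(t) = ∫₀^{T−t} (∫_r^{t+r} s^{α−β−1} ds)² dr`. -/
noncomputable def chiFun (α β T t : ℝ) : ℝ :=
  ∫ r in Ioo (0 : ℝ) (T - t), (∫ s in Ioo r (t + r), s ^ (α - β - 1)) ^ 2

lemma chi_aux_integrableOn (γ T : ℝ) (hγ : -(1 : ℝ) / 2 < γ) (hT : 0 < T) :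
    IntegrableOn (fun r : ℝ => (T ^ γ + r ^ γ) ^ 2) (Ioo 0 T) := by
  have h1 : IntegrableOn (fun r : ℝ => r ^ γ) (Ioo 0 T) := by
    have := intervalIntegral.intervalIntegrable_rpow' (a := 0) (b := T) (show (-1 : ℝ) < γ by linarith)
    rwa [intervalIntegrable_iff_integrableOn_Ioo_of_le hT.le] at this
  have h2 : IntegrableOn (fun r : ℝ => r ^ (2 * γ)) (Ioo 0 T) := by
    have := intervalIntegral.intervalIntegrable_rpow' (a := 0) (b := T) (show (-1 : ℝ) < 2 * γ by linarith)
    rwa [intervalIntegrable_iff_integrableOn_Ioo_of_le hT.le] at this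
  have h3 : IntegrableOn
      (fun r : ℝ => T ^ γ * T ^ γ + (2 * T ^ γ) * r ^ γ + r ^ (2 * γ)) (Ioo 0 T) := by
    exact ((integrableOn_const (by simp [hT])).add (h1.const_mul _)).add h2
  apply h3.congr_fun _ measurableSet_Ioo
  intro r hr
  have hr0 : 0 < r := hr.1
  have : r ^ (2 * γ) = r ^ γ * r ^ γ := by
    rw [two_mul, Real.rpow_add hr0]
  simp only [this]; ring

lemma chi_inner_bound (γ T t r : ℝ) (ht : 0 < t) (htT : t < T)
    (hr : r ∈ Ioo (0 : ℝ) (T - t)) :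
    (∫ s in Ioo r (t + r), s ^ γ) ^ 2 ≤ t ^ 2 * (T ^ γ + r ^ γ) ^ 2 := by
  obtain ⟨hr0, hrT⟩ := hr
  have hT0 : (0 : ℝ) < T := lt_trans ht htT
  have hM : 0 ≤ T ^ γ + r ^ γ :=
    add_nonneg (Real.rpow_nonneg hT0.le _) (Real.rpow_nonneg hr0.le _)
  have hmeas : volume (Ioo r (t + r)) < ⊤ := by
    rw [Real.volume_Ioo]; exact ENNReal.ofReal_lt_top
  have key : ‖∫ s in Ioo r (t + r), s ^ γ‖ ≤ (T ^ γ + r ^ γ) * (volume (Ioo r (t + r))).toReal := by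
    apply norm_setIntegral_le_of_norm_le_const_ae' hmeas
    filter_upwards with s hs
    obtain ⟨hs1, hs2⟩ := hs
    have hs0 : 0 < s := lt_trans hr0 hs1
    rw [Real.norm_eq_abs, abs_of_nonneg (Real.rpow_nonneg hs0.le _)]
    rcases le_or_gt 0 γ with hγ0 | hγ0
    · have h1 : s ^ γ ≤ T ^ γ := Real.rpow_le_rpow hs0.le (by linarith) hγ0
      have h2 : 0 ≤ r ^ γ := Real.rpow_nonneg hr0.le _
      linarith
    · have h1 : s ^ γ ≤ r ^ γ := Real.rpow_le_rpow_of_nonpos hr0 hs1.le hγ0.le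
      have h2 : 0 ≤ T ^ γ := Real.rpow_nonneg hT0.le _
      linarith
  have hvol : (volume (Ioo r (t + r))).toReal = t := by
    rw [Real.volume_Ioo, ENNReal.toReal_ofReal (by linarith)]
    ring
  rw [hvol] at key
  calc (∫ s in Ioo r (t + r), s ^ γ) ^ 2
      = ‖∫ s in Ioo r (t + r), s ^ γ‖ ^ 2 := by
        rw [Real.norm_eq_abs, sq_abs]
    _ ≤ ((T ^ γ + r ^ γ) * t) ^ 2 := by
        apply pow_le_pow_left₀ (norm_nonneg _) key
    _ = t ^ 2 * (T ^ γ + r ^ γ) ^ 2 := by ring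

/-- Case `α − β > 1/2`: `χ(t) ≤ N(α,β,T) t²` on `(0,T)`. -/
theorem chiFun_bound_large (α β T : ℝ) (h : 1 / 2 < α - β) (hT : 0 < T) :
    ∃ N : ℝ, 0 < N ∧ ∀ t ∈ Ioo (0 : ℝ) T, chiFun α β T t ≤ N * t ^ 2 := by
  set γ := α - β - 1 with hγdef
  have hγ : -(1 : ℝ) / 2 < γ := by simp only [hγdef]; linarith
  have hint := chi_aux_integrableOn γ T hγ hT
  refine ⟨(∫ r in Ioo (0 : ℝ) T, (T ^ γ + r ^ γ) ^ 2) + 1, ?_, ?_⟩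
  · have : 0 ≤ ∫ r in Ioo (0 : ℝ) T, (T ^ γ + r ^ γ) ^ 2 :=
      integral_nonneg fun r => sq_nonneg _
    linarith
  · intro t ht
    obtain ⟨ht0, htT⟩ := ht
    have hsub : Ioo (0 : ℝ) (T - t) ⊆ Ioo 0 T := Ioo_subset_Ioo le_rfl (by linarith)
    have hgint : IntegrableOn (fun r : ℝ => t ^ 2 * (T ^ γ + r ^ γ) ^ 2) (Ioo 0 (T - t)) :=
      ((hint.mono_set hsub).const_mul _)
    have step1 : chiFun α β T t ≤
        ∫ r in Ioo (0 : ℝ) (T - t), t ^ 2 * (T ^ γ + r ^ γ) ^ 2 := by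
      unfold chiFun
      apply integral_mono_of_nonneg
      · filter_upwards with r
        exact sq_nonneg _
      · exact hgint
      · filter_upwards [ae_restrict_mem measurableSet_Ioo] with r hr
        exact chi_inner_bound γ T t r ht0 htT hr
    have step2 : ∫ r in Ioo (0 : ℝ) (T - t), t ^ 2 * (T ^ γ + r ^ γ) ^ 2
        ≤ t ^ 2 * ∫ r in Ioo (0 : ℝ) T, (T ^ γ + r ^ γ) ^ 2 := by
      rw [integral_const_mul]
      apply mul_le_mul_of_nonneg_left _ (sq_nonneg t)
      apply setIntegral_mono_set hint
      · filter_upwards with r; exact sq_nonneg _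
      · exact HasSubset.Subset.eventuallyLE hsub
    calc chiFun α β T t ≤ _ := step1
      _ ≤ t ^ 2 * ∫ r in Ioo (0 : ℝ) T, (T ^ γ + r ^ γ) ^ 2 := step2
      _ ≤ ((∫ r in Ioo (0 : ℝ) T, (T ^ γ + r ^ γ) ^ 2) + 1) * t ^ 2 := by
          nlinarith [sq_nonneg t]
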